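/- arXiv:2103.01412 — 3 statements merged into one kernel-verified Lean document; each statement's English description precedes it below -/
import Mathlib

section
/- For integers q, m, r with 0 ≤ r ≤ m < q, the alternating sum ∑_{k=r}^{m} C(q,k)·C(k,k-r)·(-1)^{k-r} equals ((-1)^{m-r}·(m-r+1)/(q-r))·C(q,m+1)·C(m+1,m-r+1). -/
/-- For integers `0 ≤ r ≤ m < q`, the alternating sum
`∑_{k=r}^{m} C(q,k)·C(k,k-r)·(-1)^{k-r}` equals
`((-1)^{m-r}·(m-r+1)/(q-r))·C(q,m+1)·C(m+1,m-r+1)` in `ℚ`. -/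
theorem sign_test_alternating_binomial_sum (q m r : ℕ) (hrm : r ≤ m) (hmq : m < q) :
    ∑ k ∈ Finset.Icc r m, (q.choose k : ℚ) * (k.choose (k - r) : ℚ) * (-1 : ℚ) ^ (k - r)
      = ((-1 : ℚ) ^ (m - r) * ((m : ℚ) - r + 1) / ((q : ℚ) - r)) *
          (q.choose (m + 1) : ℚ) * ((m + 1).choose (m - r + 1) : ℚ) := by
  have hrq : r < q := lt_of_le_of_lt hrm hmq
  have hq0 : ((q : ℚ) - r) ≠ 0 := by
    have : (r : ℚ) < q := by exact_mod_cast hrq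
    linarith
  revert hmq
  induction m, hrm using Nat.le_induction with
  | base =>
    intro hmq
    simp only [Finset.Icc_self, Finset.sum_singleton, Nat.sub_self, Nat.choose_self,
      Nat.choose_zero_right, pow_zero, Nat.cast_one, mul_one]
    have h1 : (q.choose (r + 1) : ℚ) * (r + 1) = (q.choose r) * (q - r) := by
      have := Nat.choose_succ_right_eq q r
      have hc : ((q - r : ℕ) : ℚ) = (q : ℚ) - r := by
        rw [Nat.cast_sub hrq.le]
      calc (q.choose (r + 1) : ℚ) * (r + 1)
          = ((q.choose (r + 1) * (r + 1) : ℕ) : ℚ) := by push_cast; ring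
        _ = ((q.choose r * (q - r) : ℕ) : ℚ) := by rw [this]
        _ = (q.choose r) * ((q:ℚ) - r) := by push_cast [Nat.cast_sub hrq.le]; ring
    simp only [zero_add, Nat.choose_one_right]
    field_simp
    push_cast
    linear_combination -h1
  | succ m hm ih =>
    intro hmq
    have ihv := ih (Nat.lt_of_succ_lt hmq)
    rw [Finset.sum_Icc_succ_top (le_trans hm (Nat.le_succ m)), ihv]
    have e1 : (m+1).choose (m - r + 1) = (m+1).choose r := by
      rw [show m - r + 1 = (m+1) - r by omega]; exact Nat.choose_symm (by omega)
    have e2 : (m+1+1).choose (m - r + 1 + 1) = (m+2).choose r := by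
      rw [show m - r + 1 + 1 = (m+2) - r by omega]; exact Nat.choose_symm (by omega)
    have h1 : (q.choose (m + 2) : ℚ) * (m + 2) = (q.choose (m + 1)) * ((q:ℚ) - (m+1)) := by
      have := Nat.choose_succ_right_eq q (m+1)
      calc (q.choose (m + 2) : ℚ) * (m + 2)
          = ((q.choose (m + 2) * (m + 2) : ℕ) : ℚ) := by push_cast; ring
        _ = ((q.choose (m+1) * (q - (m+1)) : ℕ) : ℚ) := by rw [this]
        _ = (q.choose (m+1)) * ((q:ℚ) - (m+1)) := by
            push_cast [Nat.cast_sub (by omega : m + 1 ≤ q)]; ring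
    have h2 : ((m+1).choose r : ℚ) * (m + 2) = ((m+2).choose r) * ((m:ℚ) + 2 - r) := by
      have := Nat.choose_mul_succ_eq (m+1) r
      calc ((m+1).choose r : ℚ) * (m + 2)
          = (((m+1).choose r * (m + 1 + 1) : ℕ) : ℚ) := by push_cast; ring
        _ = (((m+2).choose r * (m + 2 - r) : ℕ) : ℚ) := by rw [this]
        _ = ((m+2).choose r) * ((m:ℚ) + 2 - r) := by
            push_cast [Nat.cast_sub (by omega : r ≤ m + 2)]; ring
    rw [show m + 1 - r = m - r + 1 by omega, e1, e2]
    have hmr : ((m - r : ℕ) : ℚ) = (m:ℚ) - r := Nat.cast_sub hm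
    have hs : ((-1:ℚ)^(m-r))^2 = 1 := by
      rw [← pow_mul, pow_mul']; norm_num
    push_cast [hmr]
    rw [pow_succ]
    field_simp
    have key : (q.choose (m+1) : ℚ) * ((m+1).choose r) * ((q:ℚ) - (m+1))
        = (q.choose (m+2) : ℚ) * ((m+2).choose r) * ((m:ℚ) + 2 - r) := by
      have h3 : ((m:ℚ)+2) ≠ 0 := by positivity
      apply mul_left_cancel₀ (mul_ne_zero h3 h3)
      calc ((m:ℚ)+2) * ((m:ℚ)+2) * ((q.choose (m+1) : ℚ) * ((m+1).choose r) * ((q:ℚ) - (m+1)))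
          = ((q.choose (m+1) : ℚ) * ((q:ℚ)-(m+1))) * (((m+1).choose r : ℚ) * ((m:ℚ)+2)) * ((m:ℚ)+2) := by
            ring
        _ = ((q.choose (m+2) : ℚ) * ((m:ℚ)+2)) * (((m+2).choose r : ℚ) * ((m:ℚ)+2-r)) * ((m:ℚ)+2) := by
            rw [← h1, h2]
        _ = ((m:ℚ)+2) * ((m:ℚ)+2) * ((q.choose (m+2) : ℚ) * ((m+2).choose r) * ((m:ℚ) + 2 - r)) := by
            ring
    push_cast at key ⊢
    linear_combination -key
end

section
/- For q independent events with probabilities p_1,...,p_q, define G_m(p) = ∑_{r=0}^{m} P(r), where P(r) = probability that exactly r or exactly q-r events occur, and assume q ≥ 2m+1. Then the partial derivative ∂G_m/∂p_j = ∑_{c∈C([q]\{j},q-m-1)} ∏_{i∈c}p_i ∏_{i∉c}(1-p_i) − ∑_{c∈C([q]\{j},m)} ∏_{i∈c}p_i ∏_{i∉c}(1-p_i), i.e., the sum over r telescopes. -/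
open Finset

noncomputable def fA {q : ℕ} (j : Fin q) (p : Fin q → ℝ) (k : ℕ) : ℝ :=
  ∑ c ∈ ((univ : Finset (Fin q)).erase j).powersetCard k,
    (∏ i ∈ c, p i) * ∏ i ∈ ((univ : Finset (Fin q)).erase j) \ c, (1 - p i)

noncomputable def aA {q : ℕ} (j : Fin q) (p : Fin q → ℝ) : ℕ → ℝ
  | 0 => 0
  | (k+1) => fA j p k

lemma keyA {q : ℕ} (j : Fin q) (p : Fin q → ℝ) (k : ℕ) (x : ℝ) :
    ∑ c ∈ powersetCard k (univ : Finset (Fin q)),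
      (∏ i ∈ c, Function.update p j x i) * ∏ i ∈ cᶜ, (1 - Function.update p j x i)
    = x * aA j p k + (1 - x) * fA j p k := by
  classical
  rw [← Finset.sum_filter_add_sum_filter_not (powersetCard k (univ : Finset (Fin q)))
    (fun c => j ∈ c)]
  have h2 : (powersetCard k (univ : Finset (Fin q))).filter (fun c => ¬ j ∈ c)
      = ((univ : Finset (Fin q)).erase j).powersetCard k := by
    ext c
    simp only [Finset.mem_filter, Finset.mem_powersetCard, Finset.subset_erase]
    constructor
    · rintro ⟨⟨h1, h2⟩, h3⟩; exact ⟨⟨h1, h3⟩, h2⟩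
    · rintro ⟨⟨h1, h3⟩, h2⟩; exact ⟨⟨h1, h2⟩, h3⟩
  have e2 : ∑ c ∈ ((univ : Finset (Fin q)).erase j).powersetCard k,
      (∏ i ∈ c, Function.update p j x i) * ∏ i ∈ cᶜ, (1 - Function.update p j x i)
      = (1 - x) * fA j p k := by
    rw [fA, Finset.mul_sum]
    refine Finset.sum_congr rfl fun c hc => ?_
    simp only [Finset.mem_powersetCard, Finset.subset_erase] at hc
    have hj : j ∉ c := hc.1.2
    have hp : ∏ i ∈ c, Function.update p j x i = ∏ i ∈ c, p i :=
      Finset.prod_congr rfl fun i hi =>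
        Function.update_of_ne (by rintro rfl; exact hj hi) _ _
    have hjc : j ∈ cᶜ := Finset.mem_compl.mpr hj
    have hset : cᶜ.erase j = ((univ : Finset (Fin q)).erase j) \ c := by
      ext i
      simp only [Finset.mem_erase, Finset.mem_compl, Finset.mem_sdiff, Finset.mem_univ,
        and_true]
    rw [← Finset.mul_prod_erase _ _ hjc, Function.update_self, hset, hp]
    have hq : ∏ i ∈ ((univ : Finset (Fin q)).erase j) \ c, (1 - Function.update p j x i)
        = ∏ i ∈ ((univ : Finset (Fin q)).erase j) \ c, (1 - p i) := by
      refine Finset.prod_congr rfl fun i hi => ?_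
      have : i ≠ j := by
        simp only [Finset.mem_sdiff, Finset.mem_erase] at hi
        exact hi.1.1
      rw [Function.update_of_ne this]
    rw [hq]; ring
  have e1 : ∑ c ∈ (powersetCard k (univ : Finset (Fin q))).filter (fun c => j ∈ c),
      (∏ i ∈ c, Function.update p j x i) * ∏ i ∈ cᶜ, (1 - Function.update p j x i)
      = x * aA j p k := by
    cases k with
    | zero =>
      simp [aA, Finset.powersetCard_zero, Finset.filter_singleton]
    | succ k' =>
      rw [aA, fA, Finset.mul_sum]
      refine Finset.sum_bij' (fun c _ => c.erase j) (fun c _ => insert j c) ?_ ?_ ?_ ?_ ?_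
      · intro c hc
        simp only [Finset.mem_filter, Finset.mem_powersetCard] at hc
        simp only [Finset.mem_powersetCard, Finset.subset_erase]
        refine ⟨⟨fun i hi => by simp, fun h => (Finset.mem_erase.mp h).1 rfl⟩, ?_⟩
        rw [Finset.card_erase_of_mem hc.2, hc.1.2]
        omega
      · intro c hc
        simp only [Finset.mem_powersetCard, Finset.subset_erase] at hc
        simp only [Finset.mem_filter, Finset.mem_powersetCard]
        refine ⟨⟨Finset.subset_univ _, ?_⟩, Finset.mem_insert_self _ _⟩
        rw [Finset.card_insert_of_notMem hc.1.2, hc.2]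
      · intro c hc
        simp only [Finset.mem_filter] at hc
        exact Finset.insert_erase hc.2
      · intro c hc
        simp only [Finset.mem_powersetCard, Finset.subset_erase] at hc
        exact Finset.erase_insert hc.1.2
      · intro c hc
        simp only [Finset.mem_filter] at hc
        have hj : j ∈ c := hc.2
        have h1 : ∏ i ∈ c, Function.update p j x i
            = x * ∏ i ∈ c.erase j, p i := by
          rw [← Finset.mul_prod_erase _ _ hj, Function.update_self]
          congr 1
          refine Finset.prod_congr rfl fun i hi => ?_
          exact Function.update_of_ne (Finset.mem_erase.mp hi).1 _ _
        have h2 : ∏ i ∈ cᶜ, (1 - Function.update p j x i)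
            = ∏ i ∈ ((univ : Finset (Fin q)).erase j) \ c.erase j, (1 - p i) := by
          have hset : cᶜ = ((univ : Finset (Fin q)).erase j) \ c.erase j := by
            ext i
            simp only [Finset.mem_compl, Finset.mem_sdiff, Finset.mem_erase]
            constructor
            · intro h; exact ⟨⟨fun hij => h (hij ▸ hj), Finset.mem_univ _⟩, fun hh => h hh.2⟩
            · rintro ⟨⟨hij, -⟩, hh⟩ hic; exact hh ⟨hij, hic⟩
          rw [hset]
          refine Finset.prod_congr rfl fun i hi => ?_
          have : i ≠ j := by
            simp only [Finset.mem_sdiff, Finset.mem_erase] at hi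
            exact hi.1.1
          rw [Function.update_of_ne this]
        rw [h1, h2]; ring
  rw [h2, e1, e2]

/-- For `q ≥ 2m+1` and `j ∈ [q]`, the function
`G_m(p) = ∑_{r=0}^{m} P(r)`, where
`P(r) = ∑_{c∈C([q],q-r)} ∏_{i∈c}p_i ∏_{i∉c}(1-p_i) + ∑_{c∈C([q],r)} ∏_{i∈c}p_i ∏_{i∉c}(1-p_i)`,
has partial derivative with respect to `p_j` equal to the telescoped difference
`∑_{c∈C([q]\{j},q-m-1)} ∏_{i∈c}p_i ∏_{i∉c}(1-p_i) − ∑_{c∈C([q]\{j},m)} ∏_{i∈c}p_i ∏_{i∉c}(1-p_i)`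
(in the latter sums, complements are taken within `[q]\{j}`). -/
theorem sign_test_partial_derivative_telescopes (q m : ℕ) (hqm : 2 * m + 1 ≤ q)
    (j : Fin q) (p : Fin q → ℝ) :
    HasDerivAt (fun x : ℝ => ∑ r ∈ Finset.range (m + 1),
        ((∑ c ∈ Finset.powersetCard (q - r) (Finset.univ : Finset (Fin q)),
            (∏ i ∈ c, Function.update p j x i) * ∏ i ∈ cᶜ, (1 - Function.update p j x i))
          + ∑ c ∈ Finset.powersetCard r (Finset.univ : Finset (Fin q)),
            (∏ i ∈ c, Function.update p j x i) * ∏ i ∈ cᶜ, (1 - Function.update p j x i)))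
      ((∑ c ∈ (Finset.univ.erase j).powersetCard (q - m - 1),
          (∏ i ∈ c, p i) * ∏ i ∈ (Finset.univ.erase j) \ c, (1 - p i))
        - ∑ c ∈ (Finset.univ.erase j).powersetCard m,
          (∏ i ∈ c, p i) * ∏ i ∈ (Finset.univ.erase j) \ c, (1 - p i))
      (p j) := by
  classical
  simp only [keyA j p]
  set E : ℝ := ∑ r ∈ range (m+1), (aA j p (q - r) + aA j p r) with hE
  set F : ℝ := ∑ r ∈ range (m+1), (fA j p (q - r) + fA j p r) with hF
  have hfun : (fun x : ℝ => ∑ r ∈ range (m+1),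
      ((x * aA j p (q - r) + (1-x) * fA j p (q - r)) + (x * aA j p r + (1-x) * fA j p r)))
      = fun x : ℝ => x * E + (1 - x) * F := by
    funext x
    rw [hE, hF, Finset.mul_sum, Finset.mul_sum, ← Finset.sum_add_distrib]
    exact Finset.sum_congr rfl fun r _ => by ring
  rw [hfun]
  have hd : HasDerivAt (fun x : ℝ => x * E + (1 - x) * F) (1 * E + (0 - 1) * F) (p j) :=
    ((hasDerivAt_id (p j)).mul_const E).add
      (((hasDerivAt_const (p j) (1:ℝ)).sub (hasDerivAt_id (p j))).mul_const F)
  have hfq : fA j p q = 0 := by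
    rw [fA]
    have hcard : ((univ : Finset (Fin q)).erase j).card < q := by
      rw [Finset.card_erase_of_mem (Finset.mem_univ j), Finset.card_univ, Fintype.card_fin]
      omega
    rw [Finset.powersetCard_eq_empty.mpr hcard, Finset.sum_empty]
  have hEF : E - F = fA j p (q - m - 1) - fA j p m := by
    have hterm : ∀ r ∈ range (m+1),
        (aA j p (q - r) + aA j p r) - (fA j p (q - r) + fA j p r)
        = (aA j p (q - r) - aA j p (q - r + 1)) + (aA j p r - aA j p (r + 1)) := by
      intro r hr
      have : fA j p (q - r) = aA j p (q - r + 1) := rfl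
      have h2 : fA j p r = aA j p (r + 1) := rfl
      rw [this, h2]; ring
    rw [hE, hF, ← Finset.sum_sub_distrib, Finset.sum_congr rfl hterm,
      Finset.sum_add_distrib, Finset.sum_range_sub' (fun r => aA j p r)]
    have hrefl : ∑ r ∈ range (m+1), (aA j p (q - r) - aA j p (q - r + 1))
        = ∑ i ∈ range (m+1), (aA j p (q - m + i) - aA j p (q - m + (i + 1))) := by
      rw [← Finset.sum_range_reflect (fun i => aA j p (q - m + i) - aA j p (q - m + (i + 1)))]
      refine Finset.sum_congr rfl fun r hr => ?_
      simp only [Finset.mem_range] at hr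
      congr 2 <;> omega
    rw [hrefl, Finset.sum_range_sub' (fun i => aA j p (q - m + i))]
    have h1 : aA j p (q - m + 0) = fA j p (q - m - 1) := by
      have : q - m + 0 = (q - m - 1) + 1 := by omega
      rw [this]; rfl
    have h2 : aA j p (q - m + (m + 1)) = 0 := by
      have : q - m + (m + 1) = q + 1 := by omega
      rw [this]
      show fA j p q = 0
      exact hfq
    have h3 : aA j p 0 = 0 := rfl
    rw [h1, h2, h3]
    show fA j p (q - m - 1) - 0 + (0 - aA j p (m + 1)) = fA j p (q - m - 1) - fA j p m
    have : aA j p (m + 1) = fA j p m := rfl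
    rw [this]; ring
  have htarget : (∑ c ∈ (Finset.univ.erase j).powersetCard (q - m - 1),
          (∏ i ∈ c, p i) * ∏ i ∈ (Finset.univ.erase j) \ c, (1 - p i))
        - ∑ c ∈ (Finset.univ.erase j).powersetCard m,
          (∏ i ∈ c, p i) * ∏ i ∈ (Finset.univ.erase j) \ c, (1 - p i)
      = 1 * E + (0 - 1) * F := by
    rw [show (1:ℝ) * E + (0 - 1) * F = E - F by ring, hEF]; rfl
  rw [htarget]
  exact hd
end

section
/- Let q ≥ 3, m with q ≥ 2m+2, ρ ∈ (0,1), and γ ∈ (0,1]. Under the minimal-correlation normal model (only coordinates 1 and 2 correlated with correlation ρ), the quantity ∑_{r=0}^{m-1} P_{q,ρ}(r) + γ·P_{q,ρ}(m) is strictly greater than its value at ρ = 0, where P_{q,ρ}(r) is the probability that exactly r or exactly q−r coordinates are positive. -/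
open MeasureTheory ProbabilityTheory Finset

open scoped ENNReal NNReal

open MeasureTheory ProbabilityTheory Finset
open scoped ENNReal NNReal

noncomputable def nu : Measure ℝ := gaussianReal 0 1

instance nu_prob : IsProbabilityMeasure nu := by unfold nu; infer_instance

lemma nu_map_neg : nu.map (fun x => -x) = nu := by
  have h := gaussianReal_map_const_mul (μ := 0) (v := 1) (-1)
  simp only [neg_one_mul] at h
  unfold nu
  rw [h]
  have h1 : ((⟨(-1:ℝ)^2, sq_nonneg _⟩ : ℝ≥0) * 1) = 1 := by ext; norm_num
  rw [neg_zero]; congr 1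

lemma nu_singleton (x : ℝ) : nu {x} = 0 :=
  (gaussianReal_absolutelyContinuous 0 one_ne_zero) (by simp)

lemma nu_Ioi : nu (Set.Ioi 0) = 2⁻¹ := by
  have h1 : nu (Set.Ioi 0) = nu (Set.Iio 0) := by
    conv_lhs => rw [← nu_map_neg]
    rw [Measure.map_apply measurable_neg measurableSet_Ioi]
    congr 1
    ext x; simp
  have huniv : Set.Iio (0:ℝ) ∪ {0} ∪ Set.Ioi 0 = Set.univ := by
    ext x
    simp only [Set.mem_union, Set.mem_Iio, Set.mem_singleton_iff, Set.mem_Ioi, Set.mem_univ,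
      iff_true]
    rcases lt_trichotomy x 0 with h | h | h
    · exact Or.inl (Or.inl h)
    · exact Or.inl (Or.inr h)
    · exact Or.inr h
  have hd1 : Disjoint (Set.Iio (0:ℝ)) {0} := by simp
  have hd2 : Disjoint (Set.Iio (0:ℝ) ∪ {0}) (Set.Ioi 0) := by
    rw [Set.disjoint_left]
    rintro x (hx | hx) hx'
    · exact lt_asymm (Set.mem_Iio.mp hx) (Set.mem_Ioi.mp hx')
    · rw [Set.mem_singleton_iff] at hx; subst hx; exact lt_irrefl _ (Set.mem_Ioi.mp hx')
  have h2 : nu (Set.Iio 0) + nu {(0:ℝ)} + nu (Set.Ioi 0) = 1 := by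
    rw [← measure_union hd1 (measurableSet_singleton 0),
      ← measure_union hd2 measurableSet_Ioi, huniv, measure_univ]
  rw [nu_singleton, add_zero, ← h1] at h2
  have h3 : 2 * nu (Set.Ioi 0) = 1 := by rw [two_mul, h2]
  calc nu (Set.Ioi 0) = 2⁻¹ * (2 * nu (Set.Ioi 0)) := by
        rw [← mul_assoc, ENNReal.inv_mul_cancel two_ne_zero (by norm_num), one_mul]
    _ = 2⁻¹ := by rw [h3, mul_one]

lemma nu_Iic : nu (Set.Iic 0) = 2⁻¹ := by
  have h : nu (Set.Iic 0) + nu (Set.Ioi 0) = 1 := by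
    rw [← measure_union (Set.Iic_disjoint_Ioi le_rfl) measurableSet_Ioi, Set.Iic_union_Ioi,
      measure_univ]
  rw [nu_Ioi] at h
  have h2 : (1:ℝ≥0∞) = 2⁻¹ + 2⁻¹ := by
    rw [ENNReal.inv_two_add_inv_two]
  rw [h2] at h
  exact (ENNReal.add_left_inj (by norm_num)).mp h

lemma nu_pos_of_open {s : Set ℝ} (hs : IsOpen s) (hne : s.Nonempty) : nu s ≠ 0 := by
  intro h
  have h2 : volume s = 0 := (gaussianReal_absolutelyContinuous' 0 one_ne_zero) h
  exact (hs.measure_pos volume hne).ne' h2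

noncomputable def mu2 : Measure (ℝ × ℝ) := nu.prod nu

instance mu2_prob : IsProbabilityMeasure mu2 := by unfold mu2; infer_instance

lemma mu2_map_neg : mu2.map (fun p : ℝ × ℝ => (-p.1, -p.2)) = mu2 := by
  have h := Measure.map_prod_map (f := fun x : ℝ => -x) (g := fun x : ℝ => -x) nu nu
    measurable_neg measurable_neg
  rw [nu_map_neg] at h
  unfold mu2
  conv_rhs => rw [h]
  rfl

lemma mu2_vert_null : mu2 {p : ℝ × ℝ | p.1 = 0} = 0 := by
  have h : {p : ℝ × ℝ | p.1 = 0} = ({0} : Set ℝ) ×ˢ (Set.univ : Set ℝ) := by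
    ext p
    rw [Set.mem_prod]
    simp only [Set.mem_setOf_eq, Set.mem_singleton_iff, Set.mem_univ, and_true]
  unfold mu2
  rw [h, Measure.prod_prod, nu_singleton, zero_mul]

lemma line_null (a b : ℝ) (hb : b ≠ 0) : mu2 {p : ℝ × ℝ | a * p.1 + b * p.2 = 0} = 0 := by
  have hms : MeasurableSet {p : ℝ × ℝ | a * p.1 + b * p.2 = 0} :=
    ((measurable_fst.const_mul a).add (measurable_snd.const_mul b)) (measurableSet_singleton 0)
  unfold mu2
  rw [Measure.prod_apply hms]
  have h : ∀ x : ℝ, (Prod.mk x ⁻¹' {p : ℝ × ℝ | a * p.1 + b * p.2 = 0}) = {-(a*x)/b} := by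
    intro x
    ext y
    simp only [Set.mem_preimage, Set.mem_setOf_eq, Set.mem_singleton_iff]
    rw [eq_div_iff hb]
    constructor <;> intro h <;> nlinarith [h]
  simp_rw [h, nu_singleton]
  simp

lemma mu2_quad : mu2 {p : ℝ × ℝ | 0 < p.1 ∧ 0 < p.2} = 4⁻¹ := by
  have h : {p : ℝ × ℝ | 0 < p.1 ∧ 0 < p.2} = (Set.Ioi 0) ×ˢ (Set.Ioi 0) := by
    ext p; simp [Set.mem_prod]
  unfold mu2
  rw [h, Measure.prod_prod, nu_Ioi]
  rw [← ENNReal.mul_inv (by norm_num) (by norm_num)]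
  norm_num

lemma quad_symm (a b : ℝ) (hb : 0 < b) :
    mu2 {p : ℝ × ℝ | p.1 ≤ 0 ∧ a * p.1 + b * p.2 ≤ 0}
      = mu2 {p : ℝ × ℝ | 0 < p.1 ∧ 0 < a * p.1 + b * p.2} := by
  have hmsL : Measurable fun p : ℝ × ℝ => a * p.1 + b * p.2 :=
    (measurable_fst.const_mul a).add (measurable_snd.const_mul b)
  have hmsU : MeasurableSet {p : ℝ × ℝ | 0 < p.1 ∧ 0 < a * p.1 + b * p.2} :=
    (measurable_fst measurableSet_Ioi).inter (hmsL measurableSet_Ioi)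
  have hmap : mu2 {p : ℝ × ℝ | 0 < p.1 ∧ 0 < a * p.1 + b * p.2}
      = mu2 {p : ℝ × ℝ | p.1 < 0 ∧ a * p.1 + b * p.2 < 0} := by
    conv_lhs => rw [← mu2_map_neg]
    rw [Measure.map_apply (f := fun p : ℝ × ℝ => (-p.1, -p.2)) (measurable_fst.neg.prodMk measurable_snd.neg) hmsU]
    congr 1
    ext p
    simp only [Set.mem_preimage, Set.mem_setOf_eq]
    constructor <;> rintro ⟨h1, h2⟩ <;> constructor <;> nlinarith
  rw [hmap]
  refine le_antisymm ?_ (measure_mono ?_)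
  · have hsub : {p : ℝ × ℝ | p.1 ≤ 0 ∧ a * p.1 + b * p.2 ≤ 0}
        ⊆ {p : ℝ × ℝ | p.1 < 0 ∧ a * p.1 + b * p.2 < 0}
          ∪ ({p : ℝ × ℝ | p.1 = 0} ∪ {p : ℝ × ℝ | a * p.1 + b * p.2 = 0}) := by
      rintro p ⟨h1, h2⟩
      rcases eq_or_lt_of_le h1 with h1' | h1'
      · exact Or.inr (Or.inl h1')
      rcases eq_or_lt_of_le h2 with h2' | h2'
      · exact Or.inr (Or.inr h2')
      · exact Or.inl ⟨h1', h2'⟩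
    calc mu2 {p : ℝ × ℝ | p.1 ≤ 0 ∧ a * p.1 + b * p.2 ≤ 0}
        ≤ mu2 ({p : ℝ × ℝ | p.1 < 0 ∧ a * p.1 + b * p.2 < 0}
          ∪ ({p : ℝ × ℝ | p.1 = 0} ∪ {p : ℝ × ℝ | a * p.1 + b * p.2 = 0})) := measure_mono hsub
      _ ≤ mu2 {p : ℝ × ℝ | p.1 < 0 ∧ a * p.1 + b * p.2 < 0}
          + mu2 ({p : ℝ × ℝ | p.1 = 0} ∪ {p : ℝ × ℝ | a * p.1 + b * p.2 = 0}) := measure_union_le _ _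
      _ ≤ mu2 {p : ℝ × ℝ | p.1 < 0 ∧ a * p.1 + b * p.2 < 0}
          + (mu2 {p : ℝ × ℝ | p.1 = 0} + mu2 {p : ℝ × ℝ | a * p.1 + b * p.2 = 0}) := by
            gcongr; exact measure_union_le _ _
      _ = mu2 {p : ℝ × ℝ | p.1 < 0 ∧ a * p.1 + b * p.2 < 0} := by
            rw [mu2_vert_null, line_null a b hb.ne']; simp
  · rintro p ⟨h1, h2⟩
    exact ⟨h1.le, h2.le⟩

lemma quad_lt (a b : ℝ) (ha : 0 < a) (hb : 0 < b) :
    4⁻¹ < mu2 {p : ℝ × ℝ | 0 < p.1 ∧ 0 < a * p.1 + b * p.2} := by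
  set R : Set (ℝ × ℝ) := (Set.Ioi 1) ×ˢ (Set.Ioo (-(a/b)) 0) with hR
  set Q : Set (ℝ × ℝ) := (Set.Ioi 0) ×ˢ (Set.Ioi 0) with hQ
  have hRne : mu2 R ≠ 0 := by
    unfold mu2
    rw [hR, Measure.prod_prod]
    refine mul_ne_zero (nu_pos_of_open isOpen_Ioi ⟨2, by norm_num⟩) (nu_pos_of_open isOpen_Ioo ?_)
    exact ⟨-(a/b)/2, by constructor <;> [nlinarith [div_pos ha hb]; nlinarith [div_pos ha hb]]⟩
  have hQval : mu2 Q = 4⁻¹ := by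
    unfold mu2
    rw [hQ, Measure.prod_prod, nu_Ioi, ← ENNReal.mul_inv (by norm_num) (by norm_num)]
    norm_num
  have hsub : Q ∪ R ⊆ {p : ℝ × ℝ | 0 < p.1 ∧ 0 < a * p.1 + b * p.2} := by
    rintro p (hp | hp)
    · simp only [hQ, Set.mem_prod, Set.mem_Ioi] at hp
      exact ⟨hp.1, by nlinarith [hp.1, hp.2]⟩
    · simp only [hR, Set.mem_prod, Set.mem_Ioi, Set.mem_Ioo] at hp
      obtain ⟨hx, hy1, hy2⟩ := hp
      refine ⟨by linarith, ?_⟩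
      have h2 : -(a/b) * b < p.2 * b := mul_lt_mul_of_pos_right hy1 hb
      have h3 : -(a/b) * b = -a := by field_simp
      nlinarith
  have hdisj : Disjoint Q R := by
    rw [Set.disjoint_left]
    rintro p hp hp'
    simp only [hQ, Set.mem_prod, Set.mem_Ioi] at hp
    simp only [hR, Set.mem_prod, Set.mem_Ioi, Set.mem_Ioo] at hp'
    linarith [hp.2, hp'.2.2]
  have hRms : MeasurableSet R := measurableSet_Ioi.prod measurableSet_Ioo
  calc (4:ℝ≥0∞)⁻¹ < 4⁻¹ + mu2 R := ENNReal.lt_add_right (by norm_num) hRne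
    _ = mu2 Q + mu2 R := by rw [hQval]
    _ = mu2 (Q ∪ R) := (measure_union hdisj hRms).symm
    _ ≤ _ := measure_mono hsub

lemma choose_lt_succ {n k : ℕ} (h : 2 * k + 1 < n) : n.choose k < n.choose (k + 1) := by
  have key := Nat.choose_succ_right_eq n k
  have hpos : 0 < n.choose k := Nat.choose_pos (by omega)
  have h2 : n.choose k * (k + 1) < n.choose k * (n - k) :=
    Nat.mul_lt_mul_of_le_of_lt (le_refl _) (by omega) hpos
  have h3 : n.choose k * (k + 1) < n.choose (k + 1) * (k + 1) := by rw [key]; exact h2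
  exact Nat.lt_of_mul_lt_mul_right h3

lemma choose_le_succ' {n k : ℕ} (h : 2 * k + 1 ≤ n) : n.choose k ≤ n.choose (k + 1) := by
  rcases Nat.lt_or_ge (2 * k + 1) n with h' | h'
  · exact (choose_lt_succ h').le
  · have : n = 2 * k + 1 := by omega
    subst this
    have h2 := Nat.choose_symm (n := 2 * k + 1) (k := k + 1) (by omega)
    simp only [show 2 * k + 1 - (k + 1) = k by omega] at h2
    omega

noncomputable def Bf (n : ℕ) (k : ℤ) : ℝ :=
  if k < 0 then 0 else (n.choose k.toNat : ℝ) * (2⁻¹ : ℝ) ^ n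

lemma Bf_nonneg (n : ℕ) (k : ℤ) : 0 ≤ Bf n k := by
  unfold Bf; split
  · exact le_refl 0
  · positivity

lemma Bf_neg (n : ℕ) {k : ℤ} (hk : k < 0) : Bf n k = 0 := by unfold Bf; rw [if_pos hk]

lemma Bf_natCast (n j : ℕ) : Bf n (j : ℤ) = (n.choose j : ℝ) * (2⁻¹ : ℝ) ^ n := by
  unfold Bf
  rw [if_neg (by omega), Int.toNat_natCast]

lemma Bf_symm (n : ℕ) (k : ℤ) : Bf n ((n : ℤ) - k) = Bf n k := by
  rcases lt_or_ge k 0 with hk | hk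
  · rw [Bf_neg n hk]
    have h1 : (0:ℤ) ≤ (n:ℤ) - k := by omega
    unfold Bf
    rw [if_neg (by omega)]
    have h2 : ((n:ℤ) - k).toNat > n := by omega
    rw [Nat.choose_eq_zero_of_lt h2]
    simp
  · rcases le_or_gt k n with hk2 | hk2
    · obtain ⟨j, rfl⟩ : ∃ j : ℕ, (j : ℤ) = k := ⟨k.toNat, by omega⟩
      have hj : j ≤ n := by exact_mod_cast hk2
      have h1 : (n:ℤ) - j = ((n - j : ℕ) : ℤ) := by push_cast [Nat.cast_sub hj]; ring
      rw [h1, Bf_natCast, Bf_natCast, (Nat.choose_symm hj)]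
    · unfold Bf
      rw [if_pos (by omega), if_neg (by omega)]
      rw [Nat.choose_eq_zero_of_lt (by omega)]
      simp

lemma Bf_diff_pos (n k : ℕ) (h : 2 * k ≤ n) : Bf n ((k:ℤ) - 1) < Bf n (k:ℤ) := by
  cases k with
  | zero =>
    rw [Bf_neg n (by norm_num), Bf_natCast]
    simp only [Nat.choose_zero_right, Nat.cast_one, one_mul]
    positivity
  | succ j =>
    have h1 : ((j+1:ℕ):ℤ) - 1 = (j:ℤ) := by push_cast; ring
    rw [h1, Bf_natCast, Bf_natCast]
    have h2 : n.choose j < n.choose (j+1) := choose_lt_succ (by omega)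
    have : (n.choose j : ℝ) < (n.choose (j+1) : ℝ) := by exact_mod_cast h2
    have hp : (0:ℝ) < (2⁻¹:ℝ)^n := by positivity
    nlinarith

lemma Bf_diff_nonneg (n : ℕ) (k : ℤ) (h : 2 * k ≤ (n:ℤ) + 1) : Bf n (k - 1) ≤ Bf n k := by
  rcases le_or_gt k 0 with hk | hk
  · rw [Bf_neg n (by omega)]
    exact Bf_nonneg n k
  · obtain ⟨j, rfl⟩ : ∃ j : ℕ, ((j:ℤ) + 1) = k := ⟨(k-1).toNat, by omega⟩
    have h1 : (j:ℤ) + 1 - 1 = (j:ℤ) := by ring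
    have h2 : (j:ℤ) + 1 = ((j+1:ℕ):ℤ) := by push_cast; ring
    rw [h1, h2, Bf_natCast, Bf_natCast]
    have h3 : n.choose j ≤ n.choose (j+1) := choose_le_succ' (by omega)
    have : (n.choose j : ℝ) ≤ (n.choose (j+1) : ℝ) := by exact_mod_cast h3
    have hp : (0:ℝ) < (2⁻¹:ℝ)^n := by positivity
    nlinarith

noncomputable def bbE (q : ℕ) (k : ℤ) : ℝ≥0∞ :=
  if k < 0 then 0 else ((q - 2).choose k.toNat : ℝ≥0∞) * 2⁻¹ ^ (q - 2)

lemma bbE_ne_top (q : ℕ) (k : ℤ) : bbE q k ≠ ⊤ := by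
  unfold bbE; split
  · simp
  · exact ENNReal.mul_ne_top (ENNReal.natCast_ne_top _) (by simp [ENNReal.pow_ne_top])

lemma bbE_toReal (q : ℕ) (k : ℤ) : (bbE q k).toReal = Bf (q - 2) k := by
  unfold bbE Bf
  split
  · simp
  · rw [ENNReal.toReal_mul, ENNReal.toReal_pow]
    simp [ENNReal.toReal_inv]

noncomputable def indL (L : ℝ × ℝ → ℝ) (p : ℝ × ℝ) : ℕ :=
  (if 0 < p.1 then 1 else 0) + (if 0 < L p then 1 else 0)

lemma indL_meas {L : ℝ × ℝ → ℝ} (hL : Measurable L) : Measurable (indL L) := by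
  unfold indL
  exact Measurable.add
    (Measurable.ite (measurableSet_lt measurable_const measurable_fst) measurable_const
      measurable_const)
    (Measurable.ite (measurableSet_lt measurable_const hL) measurable_const measurable_const)

lemma indL_le_two (L : ℝ × ℝ → ℝ) (p : ℝ × ℝ) : indL L p ≤ 2 := by
  unfold indL; split <;> split <;> omega

lemma indL_zero (L : ℝ × ℝ → ℝ) :
    indL L ⁻¹' {0} = {p : ℝ × ℝ | ¬ 0 < p.1 ∧ ¬ 0 < L p} := by
  ext p; simp only [Set.mem_preimage, Set.mem_singleton_iff, Set.mem_setOf_eq, indL]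
  split <;> split <;> simp_all

lemma indL_two (L : ℝ × ℝ → ℝ) :
    indL L ⁻¹' {2} = {p : ℝ × ℝ | 0 < p.1 ∧ 0 < L p} := by
  ext p; simp only [Set.mem_preimage, Set.mem_singleton_iff, Set.mem_setOf_eq, indL]
  split <;> split <;> simp_all

lemma indL_partition {L : ℝ × ℝ → ℝ} (hL : Measurable L) :
    mu2 (indL L ⁻¹' {0}) + mu2 (indL L ⁻¹' {1}) + mu2 (indL L ⁻¹' {2}) = 1 := by
  have hms : ∀ j : ℕ, MeasurableSet (indL L ⁻¹' {j}) :=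
    fun j => (indL_meas hL) (measurableSet_singleton j)
  have hd : Disjoint (indL L ⁻¹' {0}) (indL L ⁻¹' {1}) := by
    rw [Set.disjoint_left]; intro p h0 h1
    simp only [Set.mem_preimage, Set.mem_singleton_iff] at h0 h1; omega
  have hd2 : Disjoint (indL L ⁻¹' {0} ∪ indL L ⁻¹' {1}) (indL L ⁻¹' {2}) := by
    rw [Set.disjoint_left]; rintro p (h | h) h2 <;>
      simp only [Set.mem_preimage, Set.mem_singleton_iff] at * <;> omega
  rw [← measure_union hd (hms 1), ← measure_union hd2 (hms 2)]
  have : indL L ⁻¹' {0} ∪ indL L ⁻¹' {1} ∪ indL L ⁻¹' {2} = Set.univ := by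
    ext p
    simp only [Set.mem_union, Set.mem_preimage, Set.mem_singleton_iff, Set.mem_univ, iff_true]
    have := indL_le_two L p
    omega
  rw [this, measure_univ]

lemma model_formula {Ω : Type*} [MeasurableSpace Ω]
    (P : Measure Ω) [IsProbabilityMeasure P] (q : ℕ) (hq : 3 ≤ q)
    (ε : Fin q → Ω → ℝ) (hmeas : ∀ i, Measurable (ε i))
    (hindep : iIndepFun ε P)
    (hgauss : ∀ i, Measure.map (ε i) P = gaussianReal 0 1)
    (L : ℝ × ℝ → ℝ) (hL : Measurable L) (Y : Fin q → Ω → ℝ)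
    (hY : ∀ i ω, Y i ω =
      if (i : ℕ) = 0 then ε ⟨0, by omega⟩ ω
      else if (i : ℕ) = 1 then L (ε ⟨0, by omega⟩ ω, ε ⟨1, by omega⟩ ω)
      else ε i ω) :
    ∀ r : ℕ, P {ω | (Finset.univ.filter (fun i => 0 < Y i ω)).card = r}
      = mu2 (indL L ⁻¹' {0}) * bbE q (r : ℤ)
        + mu2 (indL L ⁻¹' {1}) * bbE q ((r : ℤ) - 1)
        + mu2 (indL L ⁻¹' {2}) * bbE q ((r : ℤ) - 2) := by
  classical
  set i0 : Fin q := ⟨0, by omega⟩ with hi0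
  set i1 : Fin q := ⟨1, by omega⟩ with hi1
  have hne : i0 ≠ i1 := by simp [hi0, hi1, Fin.ext_iff]
  set g : Ω → ℝ × ℝ := fun ω => (ε i0 ω, ε i1 ω) with hgdef
  have hgmeas : Measurable g := (hmeas i0).prodMk (hmeas i1)
  have hglaw : Measure.map g P = mu2 := by
    have hif : IndepFun (ε i0) (ε i1) P := hindep.indepFun hne
    rw [(indepFun_iff_map_prod_eq_prod_map_map (hmeas i0).aemeasurable
      (hmeas i1).aemeasurable).mp hif, hgauss, hgauss]
    rfl
  set T : Finset (Fin q) := Finset.univ.filter (fun i => 2 ≤ (i : ℕ)) with hT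
  set S2 : Finset (Fin q) := {i0, i1} with hS2
  have hS2card : ∀ i, i ∈ S2 ↔ (i : ℕ) < 2 := by
    intro i
    simp only [hS2, Finset.mem_insert, Finset.mem_singleton, hi0, hi1, Fin.ext_iff]
    omega
  have hTmem : ∀ i, i ∈ T ↔ 2 ≤ (i : ℕ) := by
    intro i; simp [hT]
  have hST : Disjoint S2 T := by
    rw [Finset.disjoint_left]
    intro i hi hit
    rw [hS2card] at hi; rw [hTmem] at hit; omega
  have h3card : S2.card = 2 := by
    rw [hS2, Finset.card_insert_of_notMem (by simp [hi0, hi1, Fin.ext_iff]),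
      Finset.card_singleton]
  have hTcard : T.card = q - 2 := by
    have hTS2 : T = S2ᶜ := by
      ext i
      rw [hTmem, Finset.mem_compl, hS2card]
      omega
    rw [hTS2, Finset.card_compl, h3card, Fintype.card_fin]
  -- the count over T
  set cardT : (↥T → ℝ) → ℕ := fun v => (Finset.univ.filter (fun i => 0 < v i)).card
    with hcardT
  have hcardTmeas : Measurable cardT := by
    have h : cardT = fun v => ∑ i : ↥T, if 0 < v i then 1 else 0 := by
      funext v; rw [hcardT]; exact Finset.card_filter _ _
    rw [h]
    exact Finset.measurable_sum _ (fun i _ =>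
      Measurable.ite (measurableSet_lt measurable_const (measurable_pi_apply i))
        measurable_const measurable_const)
  set rT : Ω → (↥T → ℝ) := fun ω (i : ↥T) => ε i ω with hrT
  set M : Ω → ℕ := fun ω => cardT (rT ω) with hM
  have hMeq : ∀ ω, M ω = (T.filter (fun i => 0 < ε i ω)).card := by
    intro ω
    simp only [hM, hcardT, hrT]
    rw [Finset.univ_eq_attach, Finset.filter_attach (fun i => 0 < ε i ω) T,
      Finset.card_map, Finset.card_attach]
  -- distribution of M
  have hfix : ∀ A : Finset (Fin q), A ⊆ T → ∀ ω : Ω,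
      ω ∈ (⋂ i ∈ T, ε i ⁻¹' (if i ∈ A then Set.Ioi 0 else Set.Iic 0)) →
        T.filter (fun i => 0 < ε i ω) = A := by
    intro A hA ω h
    simp only [Set.mem_iInter] at h
    ext i
    simp only [Finset.mem_filter]
    constructor
    · rintro ⟨hiT, hpos⟩
      by_contra hiA
      have h2 := h i hiT
      rw [if_neg hiA] at h2
      exact absurd (Set.mem_Iic.mp h2) (not_le.mpr hpos)
    · intro hiA
      have hiT := hA hiA
      have h2 := h i hiT
      rw [if_pos hiA] at h2
      exact ⟨hiT, Set.mem_Ioi.mp h2⟩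
  have hMdist : ∀ k : ℕ, P {ω | M ω = k}
      = ((q - 2).choose k : ℝ≥0∞) * 2⁻¹ ^ (q - 2) := by
    intro k
    have hsetid : {ω | M ω = k}
        = ⋃ A ∈ T.powersetCard k, ⋂ i ∈ T,
            ε i ⁻¹' (if i ∈ A then Set.Ioi 0 else Set.Iic 0) := by
      ext ω
      simp only [Set.mem_setOf_eq, Set.mem_iUnion, hMeq]
      constructor
      · intro h
        refine ⟨T.filter (fun i => 0 < ε i ω),
          Finset.mem_powersetCard.mpr ⟨Finset.filter_subset _ _, h⟩, ?_⟩
        simp only [Set.mem_iInter]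
        intro i hi
        simp only [Set.mem_preimage]
        by_cases hpos : 0 < ε i ω
        · have hmem : i ∈ T.filter (fun i => 0 < ε i ω) := Finset.mem_filter.mpr ⟨hi, hpos⟩
          rw [if_pos hmem]
          exact Set.mem_Ioi.mpr hpos
        · have hmem : i ∉ T.filter (fun i => 0 < ε i ω) :=
            fun hmem => hpos (Finset.mem_filter.mp hmem).2
          rw [if_neg hmem]
          exact Set.mem_Iic.mpr (not_lt.mp hpos)
      · rintro ⟨A, hA, h⟩
        rw [Finset.mem_powersetCard] at hA
        rw [hfix A hA.1 ω h]
        exact hA.2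
    have hmsInter : ∀ A : Finset (Fin q), MeasurableSet
        (⋂ i ∈ T, ε i ⁻¹' (if i ∈ A then Set.Ioi 0 else Set.Iic 0)) := by
      intro A
      refine MeasurableSet.biInter (Set.to_countable _) (fun i _ => ?_)
      refine (hmeas i) ?_
      split
      · exact measurableSet_Ioi
      · exact measurableSet_Iic
    rw [hsetid, measure_biUnion_finset ?_ (fun A _ => hmsInter A)]
    · have hterm : ∀ A ∈ T.powersetCard k,
          P (⋂ i ∈ T, ε i ⁻¹' (if i ∈ A then Set.Ioi 0 else Set.Iic 0))
            = 2⁻¹ ^ (q - 2) := by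
        intro A hA
        rw [hindep.measure_inter_preimage_eq_mul T
          (sets := fun i => if i ∈ A then Set.Ioi 0 else Set.Iic 0)
          (fun i _ => by split <;> [exact measurableSet_Ioi; exact measurableSet_Iic])]
        have hone : ∀ i ∈ T, P (ε i ⁻¹' (if i ∈ A then Set.Ioi 0 else Set.Iic 0)) = 2⁻¹ := by
          intro i _
          rw [← Measure.map_apply (hmeas i) (by split <;>
            [exact measurableSet_Ioi; exact measurableSet_Iic]), hgauss i]
          split
          · exact nu_Ioi
          · exact nu_Iic
        rw [Finset.prod_congr rfl hone, Finset.prod_const, hTcard]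
      rw [Finset.sum_congr rfl hterm, Finset.sum_const, Finset.card_powersetCard, hTcard,
        nsmul_eq_mul]
    · intro A hA B hB hAB
      rw [Function.onFun]
      rw [Set.disjoint_left]
      intro ω hωA hωB
      rw [Finset.mem_coe, Finset.mem_powersetCard] at hA hB
      exact hAB ((hfix A hA.1 ω hωA).symm.trans (hfix B hB.1 ω hωB))
  -- independence of g and rT
  have hrTmeas : Measurable rT := measurable_pi_lambda _ (fun i => hmeas i)
  have hkey : ∀ (U : Set (ℝ × ℝ)), MeasurableSet U → ∀ V : Set (↥T → ℝ), MeasurableSet V →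
      P (g ⁻¹' U ∩ rT ⁻¹' V) = mu2 U * P (rT ⁻¹' V) := by
    intro U hU V hV
    have hblock := hindep.indepFun_finset S2 T hST hmeas
    have hφ : Measurable (fun v : (↥S2 → ℝ) =>
        (v ⟨i0, (hS2card i0).mpr (by simp [hi0])⟩, v ⟨i1, (hS2card i1).mpr (by simp [hi1])⟩)) :=
      (measurable_pi_apply _).prodMk (measurable_pi_apply _)
    have h2 : IndepFun g rT P := by
      have h3 := hblock.comp hφ (measurable_id (α := ↥T → ℝ))
      exact h3
    rw [h2.measure_inter_preimage_eq_mul U V hU hV, ← hglaw, Measure.map_apply hgmeas hU]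
  -- counting identity
  have hcount : ∀ ω, (Finset.univ.filter (fun i => 0 < Y i ω)).card
      = indL L (g ω) + M ω := by
    intro ω
    have huniv : (Finset.univ : Finset (Fin q)) = S2 ∪ T := by
      ext i
      simp only [Finset.mem_univ, Finset.mem_union, true_iff, hS2card, hTmem]
      omega
    rw [huniv, Finset.filter_union, Finset.card_union_of_disjoint
      (Finset.disjoint_filter_filter hST)]
    have hpart1 : (S2.filter (fun i => 0 < Y i ω)).card = indL L (g ω) := by
      have hYi0 : Y i0 ω = ε i0 ω := by rw [hY]; simp [hi0]
      have hYi1 : Y i1 ω = L (g ω) := by rw [hY]; simp [hi1, hgdef, hi0]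
      rw [hS2, Finset.filter_insert, Finset.filter_singleton]
      unfold indL
      by_cases h0 : 0 < Y i0 ω <;> by_cases h1 : 0 < Y i1 ω
      · rw [if_pos h0, if_pos h1, Finset.card_insert_of_notMem (by simp [hne]),
          Finset.card_singleton]
        rw [hYi0] at h0; rw [hYi1] at h1
        rw [if_pos h0, if_pos h1]
      · rw [if_pos h0, if_neg h1, Finset.card_insert_of_notMem (by simp), Finset.card_empty]
        rw [hYi0] at h0; rw [hYi1] at h1
        rw [if_pos h0, if_neg h1]
      · rw [if_neg h0, if_pos h1, Finset.card_singleton]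
        rw [hYi0] at h0; rw [hYi1] at h1
        rw [if_neg h0, if_pos h1]
      · rw [if_neg h0, if_neg h1, Finset.card_empty]
        rw [hYi0] at h0; rw [hYi1] at h1
        rw [if_neg h0, if_neg h1]
    have hpart2 : (T.filter (fun i => 0 < Y i ω)).card = M ω := by
      rw [hMeq]
      congr 1
      apply Finset.filter_congr
      intro i hi
      rw [hTmem] at hi
      rw [hY]
      rw [if_neg (by omega), if_neg (by omega)]
    rw [hpart1, hpart2]
  -- main decomposition
  intro r
  have hsetid2 : {ω | (Finset.univ.filter (fun i => 0 < Y i ω)).card = r}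
      = ⋃ j ∈ Finset.range 3, (g ⁻¹' (indL L ⁻¹' {j}) ∩ rT ⁻¹' {v | j + cardT v = r}) := by
    ext ω
    simp only [Set.mem_setOf_eq, Set.mem_iUnion, Set.mem_inter_iff, Set.mem_preimage,
      Set.mem_singleton_iff, Finset.mem_range, hcount]
    constructor
    · intro h
      exact ⟨indL L (g ω), by have := indL_le_two L (g ω); omega, rfl, h⟩
    · rintro ⟨j, _, hj, hjm⟩
      rw [hj]
      exact hjm
  have hVmeas : ∀ j : ℕ, MeasurableSet {v : ↥T → ℝ | j + cardT v = r} := by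
    intro j
    have : {v : ↥T → ℝ | j + cardT v = r} = (fun v => j + cardT v) ⁻¹' {r} := rfl
    rw [this]
    exact (measurable_const.add hcardTmeas) (measurableSet_singleton r)
  have hjval : ∀ j : ℕ, j ≤ 2 → P (rT ⁻¹' {v | j + cardT v = r}) = bbE q ((r : ℤ) - j) := by
    intro j hj
    rcases le_or_gt j r with hjr | hjr
    · have h1 : rT ⁻¹' {v | j + cardT v = r} = {ω | M ω = r - j} := by
        ext ω
        simp only [Set.mem_preimage, Set.mem_setOf_eq, hM]
        omega
      rw [h1, hMdist]
      unfold bbE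
      rw [if_neg (by omega), show ((r:ℤ) - (j:ℤ)).toNat = r - j by omega]
    · have h1 : rT ⁻¹' {v | j + cardT v = r} = ∅ := by
        ext ω
        simp only [Set.mem_preimage, Set.mem_setOf_eq, Set.mem_empty_iff_false, iff_false]
        omega
      rw [h1, measure_empty]
      unfold bbE
      rw [if_pos (by omega)]
  rw [hsetid2, measure_biUnion_finset ?_ ?_]
  · rw [show Finset.range 3 = {0, 1, 2} by rfl]
    rw [Finset.sum_insert (by norm_num), Finset.sum_insert (by norm_num),
      Finset.sum_singleton]
    rw [hkey _ ((indL_meas hL) (measurableSet_singleton 0)) _ (hVmeas 0),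
      hkey _ ((indL_meas hL) (measurableSet_singleton 1)) _ (hVmeas 1),
      hkey _ ((indL_meas hL) (measurableSet_singleton 2)) _ (hVmeas 2),
      hjval 0 (by omega), hjval 1 (by omega), hjval 2 (by omega)]
    norm_num
    ring
  · intro a ha b hb hab
    rw [Function.onFun, Set.disjoint_left]
    rintro ω ⟨hω1, _⟩ ⟨hω2, _⟩
    simp only [Set.mem_preimage, Set.mem_singleton_iff] at hω1 hω2
    exact hab (hω1.symm.trans hω2)
  · intro j _
    exact (hgmeas ((indL_meas hL) (measurableSet_singleton j))).inter (hrTmeas (hVmeas j))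

lemma endgame (n q m : ℕ) (hn : (n:ℤ) = (q:ℤ) - 2) (hm : 2*m+2 ≤ q)
    (γ w₁ u₀ u₁ : ℝ) (hγ0 : 0 < γ) (hγ1 : γ ≤ 1) (hw1 : 1/4 < w₁)
    (hs0 : 2*(1/4 : ℝ) + u₀ = 1) (hs1 : 2*w₁ + u₁ = 1)
    (f₀ f₁ : ℕ → ℝ)
    (hf₀ : ∀ r : ℕ, f₀ r = (1/4) * Bf n (r : ℤ) + u₀ * Bf n ((r:ℤ)-1) + (1/4) * Bf n ((r:ℤ)-2))
    (hf₁ : ∀ r : ℕ, f₁ r = w₁ * Bf n (r : ℤ) + u₁ * Bf n ((r:ℤ)-1) + w₁ * Bf n ((r:ℤ)-2)) :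
    (∑ r ∈ Finset.range m, (f₀ r + f₀ (q-r))) + γ*(f₀ m + f₀ (q-m))
      < (∑ r ∈ Finset.range m, (f₁ r + f₁ (q-r))) + γ*(f₁ m + f₁ (q-m)) := by
  set D : ℝ := w₁ - 1/4 with hD
  have hDpos : 0 < D := by rw [hD]; linarith
  set GG : ℤ → ℝ := fun k => Bf n k - Bf n (k-1) with hGG
  have hu₀ : u₀ = 1/2 := by linarith
  have hu₁ : u₁ = 1 - 2*w₁ := by linarith
  have key : ∀ r : ℕ, r ≤ m → (f₁ r + f₁ (q-r)) - (f₀ r + f₀ (q-r))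
      = (D*2) * (Bf n (r:ℤ) - 2*Bf n ((r:ℤ)-1) + Bf n ((r:ℤ)-2)) := by
    intro r hr
    rw [hf₀ r, hf₀ (q-r), hf₁ r, hf₁ (q-r)]
    have hc : ((q-r:ℕ):ℤ) = (q:ℤ) - r := by omega
    rw [hc]
    have hsym0 : Bf n ((q:ℤ)-r) = Bf n ((r:ℤ)-2) := by
      rw [show (q:ℤ)-r = (n:ℤ) - ((r:ℤ)-2) by omega, Bf_symm]
    have hsym1 : Bf n ((q:ℤ)-r-1) = Bf n ((r:ℤ)-1) := by
      rw [show (q:ℤ)-r-1 = (n:ℤ) - ((r:ℤ)-1) by omega, Bf_symm]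
    have hsym2 : Bf n ((q:ℤ)-r-2) = Bf n (r:ℤ) := by
      rw [show (q:ℤ)-r-2 = (n:ℤ) - (r:ℤ) by omega, Bf_symm]
    rw [hsym0, hsym1, hsym2, hu₀, hu₁, hD]
    ring
  have htel : ∑ r ∈ Finset.range m, (Bf n (r:ℤ) - 2*Bf n ((r:ℤ)-1) + Bf n ((r:ℤ)-2))
      = GG ((m:ℤ)-1) := by
    have h1 := Finset.sum_range_sub (f := fun i : ℕ => GG ((i:ℤ)-1)) m
    have h2 : ∀ i : ℕ, GG (((i+1:ℕ):ℤ)-1) - GG ((i:ℤ)-1)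
        = Bf n (i:ℤ) - 2*Bf n ((i:ℤ)-1) + Bf n ((i:ℤ)-2) := by
      intro i
      have hc : ((i+1:ℕ):ℤ)-1 = (i:ℤ) := by push_cast; ring
      rw [hc, hGG]
      have hc2 : (i:ℤ)-1-1 = (i:ℤ)-2 := by ring
      simp only
      rw [hc2]
      ring
    rw [Finset.sum_congr rfl (fun i _ => (h2 i).symm), h1]
    have hGGneg : GG (((0:ℕ):ℤ)-1) = 0 := by
      rw [hGG]
      simp only
      rw [Bf_neg n (by norm_num), Bf_neg n (by norm_num)]
      ring
    rw [hGGneg, sub_zero]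
  have hsum1 : ∑ r ∈ Finset.range m, (f₁ r + f₁ (q-r))
      = (∑ r ∈ Finset.range m, (f₀ r + f₀ (q-r))) + (D*2) * GG ((m:ℤ)-1) := by
    have h1 : ∀ r ∈ Finset.range m, f₁ r + f₁ (q-r)
        = (f₀ r + f₀ (q-r)) + (D*2) * (Bf n (r:ℤ) - 2*Bf n ((r:ℤ)-1) + Bf n ((r:ℤ)-2)) := by
      intro r hr
      have := key r (le_of_lt (Finset.mem_range.mp hr))
      linarith
    rw [Finset.sum_congr rfl h1, Finset.sum_add_distrib, ← Finset.mul_sum, htel]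
  have hccm : Bf n (m:ℤ) - 2*Bf n ((m:ℤ)-1) + Bf n ((m:ℤ)-2) = GG (m:ℤ) - GG ((m:ℤ)-1) := by
    rw [hGG]
    simp only
    rw [show (m:ℤ)-1-1 = (m:ℤ)-2 by ring]
    ring
  have hpairm : f₁ m + f₁ (q-m) = (f₀ m + f₀ (q-m)) + (D*2) * (GG (m:ℤ) - GG ((m:ℤ)-1)) := by
    have := key m le_rfl
    rw [hccm] at this
    linarith
  have hGGm : 0 < GG (m:ℤ) := by
    have := Bf_diff_pos n m (by omega)
    rw [hGG]
    simp only
    linarith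
  have hGGm1 : 0 ≤ GG ((m:ℤ)-1) := by
    have := Bf_diff_nonneg n ((m:ℤ)-1) (by omega)
    rw [hGG]
    simp only
    linarith
  rw [hsum1, hpairm]
  nlinarith [mul_nonneg (mul_nonneg (by norm_num : (0:ℝ) ≤ 2) hDpos.le)
      (mul_nonneg (sub_nonneg.mpr hγ1) hGGm1),
    mul_pos (mul_pos (by norm_num : (0:ℝ) < 2) hDpos) (mul_pos hγ0 hGGm)]

/-- Under the minimal-correlation normal model (only coordinates 1 and 2 correlated,
with correlation `ρ ∈ (0,1)`; realized from i.i.d. standard normals `ε` via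
`Y_1 = ε_1`, `Y_2 = s·ε_1 + √(1-s²)·ε_2`, `Y_i = ε_i` otherwise, at `s = ρ` and
`s = 0`), for `q ≥ 3`, `q ≥ 2m+2` and `γ ∈ (0,1]`, the quantity
`∑_{r=0}^{m-1} P_{q,ρ}(r) + γ·P_{q,ρ}(m)` is strictly greater than its value at
`ρ = 0`, where `P_{q,s}(r)` is the probability that exactly `r` or exactly `q−r`
coordinates are positive. -/
theorem minimal_correlation_size_distortion {Ω : Type*} [MeasurableSpace Ω]
    (P : Measure Ω) [IsProbabilityMeasure P] (q m : ℕ) (hq : 3 ≤ q)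
    (hm : 2 * m + 2 ≤ q) (ρ γ : ℝ) (hρ0 : 0 < ρ) (hρ1 : ρ < 1)
    (hγ0 : 0 < γ) (hγ1 : γ ≤ 1)
    (ε : Fin q → Ω → ℝ) (hmeas : ∀ i, Measurable (ε i))
    (hindep : iIndepFun ε P)
    (hgauss : ∀ i, Measure.map (ε i) P = gaussianReal 0 1)
    (Yρ Y0 : Fin q → Ω → ℝ)
    (hYρ : ∀ i ω, Yρ i ω =
      if (i : ℕ) = 0 then ε ⟨0, by omega⟩ ω
      else if (i : ℕ) = 1 then ρ * ε ⟨0, by omega⟩ ω + Real.sqrt (1 - ρ ^ 2) * ε ⟨1, by omega⟩ ω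
      else ε i ω)
    (hY0 : ∀ i ω, Y0 i ω = ε i ω) :
    (∑ r ∈ Finset.range m,
        ((P {ω | (Finset.univ.filter (fun i => 0 < Y0 i ω)).card = r}).toReal
          + (P {ω | (Finset.univ.filter (fun i => 0 < Y0 i ω)).card = q - r}).toReal))
      + γ * ((P {ω | (Finset.univ.filter (fun i => 0 < Y0 i ω)).card = m}).toReal
          + (P {ω | (Finset.univ.filter (fun i => 0 < Y0 i ω)).card = q - m}).toReal)
    < (∑ r ∈ Finset.range m,
        ((P {ω | (Finset.univ.filter (fun i => 0 < Yρ i ω)).card = r}).toReal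
          + (P {ω | (Finset.univ.filter (fun i => 0 < Yρ i ω)).card = q - r}).toReal))
      + γ * ((P {ω | (Finset.univ.filter (fun i => 0 < Yρ i ω)).card = m}).toReal
          + (P {ω | (Finset.univ.filter (fun i => 0 < Yρ i ω)).card = q - m}).toReal) := by
  classical
  set c : ℝ := Real.sqrt (1 - ρ^2) with hcdef
  have hcpos : 0 < c := Real.sqrt_pos.mpr (by nlinarith)
  set Lρ : ℝ × ℝ → ℝ := fun p => ρ * p.1 + c * p.2 with hLρ
  set L0 : ℝ × ℝ → ℝ := fun p => p.2 with hL0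
  have hLρmeas : Measurable Lρ := (measurable_fst.const_mul ρ).add (measurable_snd.const_mul c)
  have hL0meas : Measurable L0 := measurable_snd
  have hYρ' : ∀ i ω, Yρ i ω =
      if (i : ℕ) = 0 then ε ⟨0, by omega⟩ ω
      else if (i : ℕ) = 1 then Lρ (ε ⟨0, by omega⟩ ω, ε ⟨1, by omega⟩ ω)
      else ε i ω := by
    intro i ω
    rw [hYρ i ω]
  have hY0' : ∀ i ω, Y0 i ω =
      if (i : ℕ) = 0 then ε ⟨0, by omega⟩ ω
      else if (i : ℕ) = 1 then L0 (ε ⟨0, by omega⟩ ω, ε ⟨1, by omega⟩ ω)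
      else ε i ω := by
    intro i ω
    rw [hY0 i ω]
    split_ifs with h0 h1
    · congr 1
      exact Fin.ext h0
    · show ε i ω = ε ⟨1, by omega⟩ ω
      congr 1
      exact Fin.ext h1
    · rfl
  have hFρraw := model_formula P q hq ε hmeas hindep hgauss Lρ hLρmeas Yρ hYρ'
  have hF0raw := model_formula P q hq ε hmeas hindep hgauss L0 hL0meas Y0 hY0'
  -- quadrant values
  have hU0U2ρ : mu2 (indL Lρ ⁻¹' {0}) = mu2 (indL Lρ ⁻¹' {2}) := by
    rw [indL_zero, indL_two]
    have hset : {p : ℝ × ℝ | ¬ 0 < p.1 ∧ ¬ 0 < Lρ p}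
        = {p : ℝ × ℝ | p.1 ≤ 0 ∧ ρ * p.1 + c * p.2 ≤ 0} := by
      ext p; simp [hLρ, not_lt]
    rw [hset]
    exact quad_symm ρ c hcpos
  have hwρEN : 4⁻¹ < mu2 (indL Lρ ⁻¹' {2}) := by
    rw [indL_two]
    exact quad_lt ρ c hρ0 hcpos
  have h02 : mu2 (indL L0 ⁻¹' {2}) = 4⁻¹ := by
    rw [indL_two]
    exact mu2_quad
  have h00 : mu2 (indL L0 ⁻¹' {0}) = 4⁻¹ := by
    rw [indL_zero]
    have hset : {p : ℝ × ℝ | ¬ 0 < p.1 ∧ ¬ 0 < L0 p} = Set.Iic 0 ×ˢ Set.Iic 0 := by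
      ext p
      rw [Set.mem_prod]
      simp [hL0, not_lt]
    rw [hset]
    unfold mu2
    rw [Measure.prod_prod, nu_Iic, ← ENNReal.mul_inv (by norm_num) (by norm_num)]
    norm_num
  have hU0U20 : mu2 (indL L0 ⁻¹' {0}) = mu2 (indL L0 ⁻¹' {2}) := h00.trans h02.symm
  -- real partition
  have hpart : ∀ L : ℝ × ℝ → ℝ, Measurable L →
      (mu2 (indL L ⁻¹' {0})).toReal + (mu2 (indL L ⁻¹' {1})).toReal
        + (mu2 (indL L ⁻¹' {2})).toReal = 1 := by
    intro L hL
    have h := congrArg ENNReal.toReal (indL_partition hL)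
    rwa [ENNReal.toReal_add (ENNReal.add_ne_top.mpr ⟨measure_ne_top _ _, measure_ne_top _ _⟩)
      (measure_ne_top _ _), ENNReal.toReal_add (measure_ne_top _ _) (measure_ne_top _ _),
      ENNReal.toReal_one] at h
  have h4r : ((4 : ℝ≥0∞)⁻¹).toReal = 1/4 := by
    rw [ENNReal.toReal_inv]
    norm_num
  -- real quantities for model ρ
  set w₁ : ℝ := (mu2 (indL Lρ ⁻¹' {2})).toReal with hw₁
  set u₁ : ℝ := (mu2 (indL Lρ ⁻¹' {1})).toReal with hu₁
  set u₀ : ℝ := (mu2 (indL L0 ⁻¹' {1})).toReal with hu₀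
  have hs1 : 2 * w₁ + u₁ = 1 := by
    have h := hpart Lρ hLρmeas
    have h2 := congrArg ENNReal.toReal hU0U2ρ
    rw [hw₁, hu₁]
    linarith
  have hs0 : 2 * (1/4 : ℝ) + u₀ = 1 := by
    have h := hpart L0 hL0meas
    rw [h00, h02, h4r] at h
    rw [hu₀]
    linarith
  have hw1 : 1/4 < w₁ := by
    have h := (ENNReal.toReal_lt_toReal (by norm_num) (measure_ne_top _ _)).mpr hwρEN
    rwa [h4r] at h
  -- real formulas
  have hFr1 : ∀ r : ℕ, (P {ω | (Finset.univ.filter (fun i => 0 < Yρ i ω)).card = r}).toReal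
      = w₁ * Bf (q-2) (r : ℤ) + u₁ * Bf (q-2) ((r:ℤ)-1) + w₁ * Bf (q-2) ((r:ℤ)-2) := by
    intro r
    rw [hFρraw r, hU0U2ρ]
    rw [ENNReal.toReal_add (ENNReal.add_ne_top.mpr
        ⟨ENNReal.mul_ne_top (measure_ne_top _ _) (bbE_ne_top q _),
         ENNReal.mul_ne_top (measure_ne_top _ _) (bbE_ne_top q _)⟩)
      (ENNReal.mul_ne_top (measure_ne_top _ _) (bbE_ne_top q _)),
      ENNReal.toReal_add (ENNReal.mul_ne_top (measure_ne_top _ _) (bbE_ne_top q _))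
        (ENNReal.mul_ne_top (measure_ne_top _ _) (bbE_ne_top q _)),
      ENNReal.toReal_mul, ENNReal.toReal_mul, ENNReal.toReal_mul,
      bbE_toReal, bbE_toReal, bbE_toReal]
  have hFr0 : ∀ r : ℕ, (P {ω | (Finset.univ.filter (fun i => 0 < Y0 i ω)).card = r}).toReal
      = (1/4) * Bf (q-2) (r : ℤ) + u₀ * Bf (q-2) ((r:ℤ)-1) + (1/4) * Bf (q-2) ((r:ℤ)-2) := by
    intro r
    rw [hF0raw r, hU0U20, h02]
    rw [ENNReal.toReal_add (ENNReal.add_ne_top.mpr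
        ⟨ENNReal.mul_ne_top (by norm_num) (bbE_ne_top q _),
         ENNReal.mul_ne_top (measure_ne_top _ _) (bbE_ne_top q _)⟩)
      (ENNReal.mul_ne_top (by norm_num) (bbE_ne_top q _)),
      ENNReal.toReal_add (ENNReal.mul_ne_top (by norm_num) (bbE_ne_top q _))
        (ENNReal.mul_ne_top (measure_ne_top _ _) (bbE_ne_top q _)),
      ENNReal.toReal_mul, ENNReal.toReal_mul, ENNReal.toReal_mul,
      bbE_toReal, bbE_toReal, bbE_toReal, h4r]
  exact endgame (q-2) q m (by omega) hm γ w₁ u₀ u₁ hγ0 hγ1 hw1 hs0 hs1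
    (fun r => (P {ω | (Finset.univ.filter (fun i => 0 < Y0 i ω)).card = r}).toReal)
    (fun r => (P {ω | (Finset.univ.filter (fun i => 0 < Yρ i ω)).card = r}).toReal)
    hFr0 hFr1
end
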